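/- Let A, B be bounded linear operators from ℝᴺ to a Hilbert space H with ‖A‖ ≤ α and ‖B‖ ≤ α, and let λ > 0. Define t(A) = A(AᵀA + λI_N)⁻¹Aᵀ (an operator on H, where Aᵀ denotes the adjoint). Then ‖t(A) − t(B)‖ ≤ (2α/λ + 2α³/λ²)‖A − B‖ in operator norm. -/

import Mathlib

open ContinuousLinearMap
set_option maxHeartbeats 1000000

section Aux

variable {N : ℕ} {H : Type*} [NormedAddCommGroup H] [InnerProductSpace ℝ H] [CompleteSpace H]

local notation "E" => EuclideanSpace ℝ (Fin N)

lemma aux_coercive (C : E →L[ℝ] H) (lam : ℝ) (x : E) :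
    lam * ‖x‖ ^ 2 ≤ inner ℝ ((adjoint C ∘L C + lam • ContinuousLinearMap.id ℝ E) x) x := by
  simp only [add_apply, coe_smul', Pi.smul_apply, id_apply, comp_apply,
    inner_add_left, inner_smul_left, adjoint_inner_left, real_inner_self_eq_norm_sq]
  have h0 : (0:ℝ) ≤ ‖C x‖ ^ 2 := sq_nonneg _
  simp only [RCLike.star_def, conj_trivial]
  nlinarith

lemma aux_isUnit (C : E →L[ℝ] H) (lam : ℝ) (hlam : 0 < lam) :
    IsUnit (adjoint C ∘L C + lam • ContinuousLinearMap.id ℝ E) := by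
  set M := adjoint C ∘L C + lam • ContinuousLinearMap.id ℝ E with hM
  have hinj : Function.Injective M := by
    have : Function.Injective (⇑(M : E →ₗ[ℝ] E)) := by
      rw [← LinearMap.ker_eq_bot, LinearMap.ker_eq_bot']
      intro x hx
      have h := aux_coercive C lam x
      rw [show ((M : E →L[ℝ] E)) x = 0 from hx] at h
      simp only [inner_zero_left] at h
      have hx2 : ‖x‖ ^ 2 ≤ 0 := by nlinarith
      have : ‖x‖ = 0 := by nlinarith [sq_nonneg ‖x‖, norm_nonneg x]
      exact norm_eq_zero.mp this
    exact this
  have hbij : Function.Bijective M :=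
    ⟨hinj, LinearMap.injective_iff_surjective (f := (M : E →ₗ[ℝ] E)) |>.mp hinj⟩
  let e : E ≃L[ℝ] E := (LinearEquiv.ofBijective (M : E →ₗ[ℝ] E) hbij).toContinuousLinearEquiv
  exact ⟨⟨M, (e.symm : E →L[ℝ] E),
    ContinuousLinearMap.ext fun x => e.apply_symm_apply x,
    ContinuousLinearMap.ext fun x => e.symm_apply_apply x⟩, rfl⟩

lemma aux_inv_norm (C : E →L[ℝ] H) (lam : ℝ) (hlam : 0 < lam) :
    ‖Ring.inverse (adjoint C ∘L C + lam • ContinuousLinearMap.id ℝ E)‖ ≤ 1 / lam := by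
  set M := adjoint C ∘L C + lam • ContinuousLinearMap.id ℝ E with hM
  have hu := aux_isUnit C lam hlam
  have hcan : M * Ring.inverse M = 1 := Ring.mul_inverse_cancel M hu
  refine ContinuousLinearMap.opNorm_le_bound _ (by positivity) fun y => ?_
  set x := Ring.inverse M y with hx
  have hMx : M x = y := by
    have := congrArg (fun f : E →L[ℝ] E => f y) hcan
    simpa [ContinuousLinearMap.mul_apply] using this
  have h1 : lam * ‖x‖ ^ 2 ≤ inner ℝ (M x) x := aux_coercive C lam x
  rw [hMx] at h1
  have h2 : (inner ℝ y x : ℝ) ≤ ‖y‖ * ‖x‖ := real_inner_le_norm y x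
  have h3 : lam * ‖x‖ ≤ ‖y‖ := by
    rcases eq_or_lt_of_le (norm_nonneg x) with h | h
    · rw [← h]; simpa using norm_nonneg y
    · nlinarith
  calc ‖x‖ ≤ ‖y‖ / lam := by rw [le_div_iff₀ hlam]; linarith
  _ = 1 / lam * ‖y‖ := by ring

end Aux

/-- Lipschitz estimate for `t(A) = A(AᵀA + λI)⁻¹Aᵀ` in operator
norm: if `‖A‖, ‖B‖ ≤ α` then `‖t(A) − t(B)‖ ≤ (2α/λ + 2α³/λ²)‖A − B‖`. -/
theorem tA_lipschitz
    {N : ℕ} {H : Type*} [NormedAddCommGroup H] [InnerProductSpace ℝ H] [CompleteSpace H]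
    (A B : EuclideanSpace ℝ (Fin N) →L[ℝ] H) (α lam : ℝ) (hlam : 0 < lam)
    (hA : ‖A‖ ≤ α) (hB : ‖B‖ ≤ α) :
    let t : (EuclideanSpace ℝ (Fin N) →L[ℝ] H) → (H →L[ℝ] H) := fun C =>
      C ∘L (Ring.inverse (adjoint C ∘L C + lam • ContinuousLinearMap.id ℝ _)) ∘L adjoint C
    ‖t A - t B‖ ≤ (2 * α / lam + 2 * α ^ 3 / lam ^ 2) * ‖A - B‖ := by
  intro t
  set MA := adjoint A ∘L A + lam • ContinuousLinearMap.id ℝ (EuclideanSpace ℝ (Fin N)) with hMA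
  set MB := adjoint B ∘L B + lam • ContinuousLinearMap.id ℝ (EuclideanSpace ℝ (Fin N)) with hMB
  set IA := Ring.inverse MA with hIA
  set IB := Ring.inverse MB with hIB
  have huA := aux_isUnit A lam hlam
  have huB := aux_isUnit B lam hlam
  have hIAMA : IA * MA = 1 := Ring.inverse_mul_cancel MA huA
  have hMBIB : MB * IB = 1 := Ring.mul_inverse_cancel MB huB
  have hdiff : IA ∘L ((MB - MA) ∘L IB) = IA - IB := by
    show IA * ((MB - MA) * IB) = IA - IB
    rw [sub_mul, mul_sub, hMBIB, mul_one, ← mul_assoc, hIAMA, one_mul]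
  have hα : 0 ≤ α := le_trans (norm_nonneg A) hA
  have key : t A - t B =
      A ∘L (IA ∘L (adjoint A - adjoint B)) + (A - B) ∘L (IA ∘L adjoint B)
        + B ∘L ((IA ∘L ((MB - MA) ∘L IB)) ∘L adjoint B) := by
    rw [hdiff]
    show A ∘L IA ∘L adjoint A - B ∘L IB ∘L adjoint B = _
    simp only [ContinuousLinearMap.comp_sub, ContinuousLinearMap.sub_comp]
    abel
  have hIAn : ‖IA‖ ≤ 1 / lam := aux_inv_norm A lam hlam
  have hIBn : ‖IB‖ ≤ 1 / lam := aux_inv_norm B lam hlam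
  have hadA : ‖adjoint A‖ = ‖A‖ := LinearIsometryEquiv.norm_map adjoint A
  have hadB : ‖adjoint B‖ = ‖B‖ := LinearIsometryEquiv.norm_map adjoint B
  have hadAB : ‖adjoint A - adjoint B‖ = ‖A - B‖ := by
    rw [show adjoint A - adjoint B = adjoint (A - B) by rw [map_sub]]
    exact LinearIsometryEquiv.norm_map adjoint (A - B)
  have hMdiff : ‖MB - MA‖ ≤ 2 * α * ‖A - B‖ := by
    have : MB - MA = adjoint B ∘L (B - A) + (adjoint B - adjoint A) ∘L A := by
      simp only [hMA, hMB, ContinuousLinearMap.comp_sub, ContinuousLinearMap.sub_comp]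
      abel
    rw [this]
    calc ‖adjoint B ∘L (B - A) + (adjoint B - adjoint A) ∘L A‖
        ≤ ‖adjoint B ∘L (B - A)‖ + ‖(adjoint B - adjoint A) ∘L A‖ := norm_add_le _ _
      _ ≤ ‖adjoint B‖ * ‖B - A‖ + ‖adjoint B - adjoint A‖ * ‖A‖ :=
          add_le_add (opNorm_comp_le _ _) (opNorm_comp_le _ _)
      _ ≤ α * ‖A - B‖ + ‖A - B‖ * α := by
          rw [hadB, show adjoint B - adjoint A = adjoint (B - A) by rw [map_sub],
            LinearIsometryEquiv.norm_map adjoint (B - A), norm_sub_rev B A]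
          gcongr <;> simp [norm_sub_rev]
      _ = 2 * α * ‖A - B‖ := by ring
  have b1 : ‖A ∘L (IA ∘L (adjoint A - adjoint B))‖ ≤ α * (1 / lam) * ‖A - B‖ := by
    calc ‖A ∘L (IA ∘L (adjoint A - adjoint B))‖
        ≤ ‖A‖ * (‖IA‖ * ‖adjoint A - adjoint B‖) :=
          (opNorm_comp_le _ _).trans (by gcongr; exact opNorm_comp_le _ _)
      _ ≤ α * ((1 / lam) * ‖A - B‖) := by rw [hadAB]; gcongr
      _ = α * (1 / lam) * ‖A - B‖ := by ring
  have b2 : ‖(A - B) ∘L (IA ∘L adjoint B)‖ ≤ ‖A - B‖ * ((1 / lam) * α) := by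
    calc ‖(A - B) ∘L (IA ∘L adjoint B)‖
        ≤ ‖A - B‖ * (‖IA‖ * ‖adjoint B‖) :=
          (opNorm_comp_le _ _).trans (by gcongr; exact opNorm_comp_le _ _)
      _ ≤ ‖A - B‖ * ((1 / lam) * α) := by rw [hadB]; gcongr
  have b3 : ‖B ∘L ((IA ∘L ((MB - MA) ∘L IB)) ∘L adjoint B)‖
      ≤ α * ((1 / lam) * (2 * α * ‖A - B‖ * (1 / lam))) * α := by
    calc ‖B ∘L ((IA ∘L ((MB - MA) ∘L IB)) ∘L adjoint B)‖
        ≤ ‖B‖ * (‖IA‖ * (‖MB - MA‖ * ‖IB‖) * ‖adjoint B‖) := by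
          refine (opNorm_comp_le _ _).trans ?_
          gcongr
          refine (opNorm_comp_le _ _).trans ?_
          gcongr
          refine (opNorm_comp_le _ _).trans ?_
          gcongr
          exact opNorm_comp_le _ _
      _ ≤ α * ((1 / lam) * (2 * α * ‖A - B‖ * (1 / lam)) * α) := by rw [hadB]; gcongr
      _ = α * ((1 / lam) * (2 * α * ‖A - B‖ * (1 / lam))) * α := by ring
  rw [key]
  calc ‖A ∘L (IA ∘L (adjoint A - adjoint B)) + (A - B) ∘L (IA ∘L adjoint B)
        + B ∘L ((IA ∘L ((MB - MA) ∘L IB)) ∘L adjoint B)‖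
      ≤ ‖A ∘L (IA ∘L (adjoint A - adjoint B))‖ + ‖(A - B) ∘L (IA ∘L adjoint B)‖
        + ‖B ∘L ((IA ∘L ((MB - MA) ∘L IB)) ∘L adjoint B)‖ := norm_add₃_le
    _ ≤ α * (1 / lam) * ‖A - B‖ + ‖A - B‖ * ((1 / lam) * α)
        + α * ((1 / lam) * (2 * α * ‖A - B‖ * (1 / lam))) * α := by
          exact add_le_add (add_le_add b1 b2) b3
    _ = (2 * α / lam + 2 * α ^ 3 / lam ^ 2) * ‖A - B‖ := by field_simp; ring
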